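/- If X is a standard normal random variable and Ψ(t,x) = (tx - (t²+1))·cos(tx) + (tx + (t²+1))·sin(tx), then for every real t, E[X·Ψ(t,X)] = 2t·exp(-t²/2). -/

import Mathlib

open MeasureTheory ProbabilityTheory Real

namespace Stmt5

open Filter Set


lemma exp_eq : (fun x : ℝ => Real.exp (-x^2/2)) = fun x => Real.exp (-(1/2) * x^2) := by
  funext x; norm_num; ring_nf

lemma hI0 : Integrable (fun x : ℝ => Real.exp (-x^2/2)) := by
  rw [exp_eq]; exact integrable_exp_neg_mul_sq (by norm_num)

lemma hI1 : Integrable (fun x : ℝ => x * Real.exp (-x^2/2)) := by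
  have h := integrable_mul_exp_neg_mul_sq (b := 1/2) (by norm_num)
  refine h.congr (ae_of_all _ fun x => ?_)
  congr 1; ring

lemma hI2 : Integrable (fun x : ℝ => x^2 * Real.exp (-x^2/2)) := by
  have h := integrable_rpow_mul_exp_neg_mul_sq (b := 1/2) (by norm_num) (s := 2) (by norm_num)
  refine h.congr (ae_of_all _ fun x => ?_)
  simp only [Real.rpow_two]
  ring_nf

lemma integrable_poly_trig (c0 c1 c2 : ℝ) (g : ℝ → ℝ) (hg : Measurable g)
    (hgb : ∀ x, ‖g x‖ ≤ 1) :
    Integrable (fun x : ℝ => (c0 + c1*x + c2*x^2) * g x * Real.exp (-x^2/2)) := by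
  have hpoly : Integrable (fun x : ℝ => (c0 + c1*x + c2*x^2) * Real.exp (-x^2/2)) := by
    have := ((hI0.const_mul c0).add (hI1.const_mul c1)).add (hI2.const_mul c2)
    refine this.congr (ae_of_all _ fun x => ?_)
    simp only [Pi.add_apply]; ring
  have := hpoly.bdd_mul (c := 1) hg.aestronglyMeasurable (ae_of_all _ hgb)
  refine this.congr (ae_of_all _ fun x => ?_)
  simp only [Pi.mul_apply]; ring



lemma T2 : Tendsto (fun x : ℝ => Real.exp (-x^2/2)) atTop (nhds 0) := by
  have h0 : Tendsto (fun x : ℝ => x^2/2) atTop atTop :=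
    (tendsto_pow_atTop two_ne_zero).atTop_div_const (by norm_num)
  have h1 : Tendsto (fun x : ℝ => -x^2/2) atTop atBot := by
    have := tendsto_neg_atTop_atBot.comp h0
    refine this.congr fun x => ?_
    simp [Function.comp, neg_div]
  exact Real.tendsto_exp_atBot.comp h1

lemma T1 : Tendsto (fun x : ℝ => x * Real.exp (-x^2/2)) atTop (nhds 0) := by
  have h := rpow_mul_exp_neg_mul_sq_isLittleO_exp_neg (b := 1/2) (by norm_num) 1
  have hlin : Tendsto (fun x : ℝ => -(1/2:ℝ) * x) atTop atBot := by
    have h0 : Tendsto (fun x : ℝ => (1/2:ℝ) * x) atTop atTop :=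
      tendsto_id.const_mul_atTop (by norm_num)
    have := tendsto_neg_atTop_atBot.comp h0
    refine this.congr fun x => ?_
    simp [Function.comp]
  have h2 := h.isBigO.trans_tendsto (Real.tendsto_exp_atBot.comp hlin)
  refine h2.congr fun x => ?_
  rw [Real.rpow_one]; congr 1; ring

lemma T1abs : Tendsto (fun x : ℝ => |x| * Real.exp (-x^2/2)) atTop (nhds 0) := by
  refine T1.congr' ?_
  filter_upwards [eventually_ge_atTop (0:ℝ)] with x hx
  rw [abs_of_nonneg hx]

noncomputable def B (t : ℝ) (x : ℝ) : ℝ :=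
  2*|t| * (|x| * Real.exp (-x^2/2)) + 2 * Real.exp (-x^2/2)

lemma TB_top (t : ℝ) : Tendsto (B t) atTop (nhds 0) := by
  have := (T1abs.const_mul (2*|t|)).add (T2.const_mul 2)
  exact (by simpa using this : Tendsto (fun x : ℝ => 2*|t| * (|x| * Real.exp (-x^2/2)) + 2 * Real.exp (-x^2/2)) atTop (nhds 0))

lemma TB_bot (t : ℝ) : Tendsto (B t) atBot (nhds 0) := by
  have := (TB_top t).comp tendsto_neg_atBot_atTop
  refine this.congr fun x => ?_
  simp [B, Function.comp, neg_sq]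

noncomputable def F (t : ℝ) (x : ℝ) : ℝ :=
  Real.exp (-x^2/2) * ((-t*x - 1) * (Real.cos (t*x) + Real.sin (t*x)))

noncomputable def F' (t : ℝ) (x : ℝ) : ℝ :=
  Real.exp (-x^2/2) * ((t*x^2 + (1-t^2)*x - 2*t) * Real.cos (t*x)
    + (t*x^2 + (1+t^2)*x) * Real.sin (t*x))

lemma F_le_B (t x : ℝ) : ‖F t x‖ ≤ B t x := by
  have he : (0:ℝ) < Real.exp (-x^2/2) := Real.exp_pos _
  have h1 : |(-t*x - 1)| ≤ |t| * |x| + 1 := by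
    calc |(-t*x - 1)| ≤ |(-t*x)| + 1 := by
          simpa using abs_sub (-t*x) 1
      _ = |t| * |x| + 1 := by rw [abs_mul, abs_neg]
  have h2 : |Real.cos (t*x) + Real.sin (t*x)| ≤ 2 := by
    calc |Real.cos (t*x) + Real.sin (t*x)| ≤ |Real.cos (t*x)| + |Real.sin (t*x)| := abs_add_le _ _
      _ ≤ 1 + 1 := add_le_add (Real.abs_cos_le_one _) (Real.abs_sin_le_one _)
      _ = 2 := by norm_num
  have : ‖F t x‖ = Real.exp (-x^2/2) * (|(-t*x - 1)| * |Real.cos (t*x) + Real.sin (t*x)|) := by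
    rw [Real.norm_eq_abs, F, abs_mul, abs_mul, abs_of_pos he]
  rw [this, B]
  have h3 : |(-t*x - 1)| * |Real.cos (t*x) + Real.sin (t*x)| ≤ (|t| * |x| + 1) * 2 :=
    mul_le_mul h1 h2 (abs_nonneg _) (by positivity)
  calc Real.exp (-x^2/2) * (|(-t*x - 1)| * |Real.cos (t*x) + Real.sin (t*x)|)
      ≤ Real.exp (-x^2/2) * ((|t| * |x| + 1) * 2) := mul_le_mul_of_nonneg_left h3 he.le
    _ = 2*|t| * (|x| * Real.exp (-x^2/2)) + 2 * Real.exp (-x^2/2) := by ring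

lemma TF_top (t : ℝ) : Tendsto (F t) atTop (nhds 0) :=
  squeeze_zero_norm (F_le_B t) (TB_top t)

lemma TF_bot (t : ℝ) : Tendsto (F t) atBot (nhds 0) :=
  squeeze_zero_norm (F_le_B t) (TB_bot t)

lemma hasDerivF (t x : ℝ) : HasDerivAt (F t) (F' t x) x := by
  have h1 : HasDerivAt (fun x : ℝ => -x^2/2) (-x) x := by
    have h := ((hasDerivAt_pow 2 x).neg).div_const 2
    norm_num at h
    refine h.congr_deriv ?_
    ring
  have hexp : HasDerivAt (fun x : ℝ => Real.exp (-x^2/2)) (Real.exp (-x^2/2) * (-x)) x :=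
    (Real.hasDerivAt_exp _).comp x h1
  have hlin : HasDerivAt (fun x : ℝ => -t*x - 1) (-t) x := by
    simpa using ((hasDerivAt_id x).const_mul (-t)).sub_const 1
  have htx : HasDerivAt (fun x : ℝ => t*x) t x := by
    simpa using (hasDerivAt_id x).const_mul t
  have hcos : HasDerivAt (fun x : ℝ => Real.cos (t*x)) (-Real.sin (t*x) * t) x := htx.cos
  have hsin : HasDerivAt (fun x : ℝ => Real.sin (t*x)) (Real.cos (t*x) * t) x := htx.sin
  have := hexp.mul (hlin.mul (hcos.add hsin))
  refine this.congr_deriv ?_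
  unfold F'
  simp only [Pi.mul_apply, Pi.add_apply]
  ring



lemma Icos (t : ℝ) : ∫ x : ℝ, Real.cos (t*x) * Real.exp (-x^2/2)
    = Real.sqrt (2*π) * Real.exp (-t^2/2) := by
  have hb : (-(1/2:ℂ)).re < 0 := by norm_num
  have h := integral_cexp_quadratic hb ((t:ℂ) * Complex.I) 0
  have hint := integrable_cexp_quadratic' hb ((t:ℂ) * Complex.I) 0
  have hre := integral_re hint
  have hx : ∀ x : ℝ, (Complex.exp (-(1/2:ℂ) * (x:ℂ)^2 + (t:ℂ)*Complex.I*(x:ℂ) + 0)).re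
      = Real.cos (t*x) * Real.exp (-x^2/2) := by
    intro x
    rw [Complex.exp_re]
    have hre' : (-(1/2:ℂ) * (x:ℂ)^2 + (t:ℂ)*Complex.I*(x:ℂ) + 0).re = -x^2/2 := by
      simp [← Complex.ofReal_pow]
      ring
    have him' : (-(1/2:ℂ) * (x:ℂ)^2 + (t:ℂ)*Complex.I*(x:ℂ) + 0).im = t*x := by
      simp [← Complex.ofReal_pow]
    rw [hre', him', mul_comm]
  have hrhs : ((π / -(-(1/2:ℂ))) ^ (1/2:ℂ)
      * Complex.exp (0 - ((t:ℂ)*Complex.I)^2 / (4 * -(1/2:ℂ)))).re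
      = Real.sqrt (2*π) * Real.exp (-t^2/2) := by
    have h1 : ((π:ℂ) / -(-(1/2:ℂ))) ^ (1/2:ℂ) = ((Real.sqrt (2*π) : ℝ) : ℂ) := by
      have hpos : (0:ℝ) ≤ 2*π := by positivity
      rw [show ((π:ℂ) / -(-(1/2:ℂ))) = (((2*π : ℝ)):ℂ) by push_cast; ring,
        show (1/2:ℂ) = ((1/2:ℝ):ℂ) by norm_num,
        ← Complex.ofReal_cpow hpos (1/2:ℝ), Real.sqrt_eq_rpow]
    have h2 : (0 - ((t:ℂ)*Complex.I)^2 / (4 * -(1/2:ℂ))) = ((-t^2/2 : ℝ) : ℂ) := by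
      rw [mul_pow, Complex.I_sq]
      push_cast
      ring
    rw [h1, h2, ← Complex.ofReal_exp, ← Complex.ofReal_mul, Complex.ofReal_re]
  calc ∫ x : ℝ, Real.cos (t*x) * Real.exp (-x^2/2)
      = ∫ x : ℝ, (Complex.exp (-(1/2:ℂ) * (x:ℂ)^2 + (t:ℂ)*Complex.I*(x:ℂ) + 0)).re := by
        exact (integral_congr_ae (ae_of_all _ fun x => (hx x).symm))
    _ = (∫ x : ℝ, Complex.exp (-(1/2:ℂ) * (x:ℂ)^2 + (t:ℂ)*Complex.I*(x:ℂ) + 0)).re := by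
        simpa using hre
    _ = Real.sqrt (2*π) * Real.exp (-t^2/2) := by rw [h]; exact hrhs

lemma Iodd (t : ℝ) : ∫ x : ℝ, x * Real.cos (t*x) * Real.exp (-x^2/2) = 0 := by
  have h := integral_neg_eq_self (fun x : ℝ => x * Real.cos (t*x) * Real.exp (-x^2/2))
    (volume : Measure ℝ)
  have h2 : (fun x : ℝ => (-x) * Real.cos (t*(-x)) * Real.exp (-(-x)^2/2))
      = fun x : ℝ => -(x * Real.cos (t*x) * Real.exp (-x^2/2)) := by
    funext x
    rw [show t*(-x) = -(t*x) by ring, Real.cos_neg, neg_sq]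
    ring
  rw [h2] at h
  rw [integral_neg] at h
  linarith
lemma meas_cos (t : ℝ) : Measurable (fun x : ℝ => Real.cos (t*x)) :=
  (measurable_id.const_mul t).cos

lemma meas_sin (t : ℝ) : Measurable (fun x : ℝ => Real.sin (t*x)) :=
  (measurable_id.const_mul t).sin

lemma bd_cos (t : ℝ) : ∀ x : ℝ, ‖Real.cos (t*x)‖ ≤ 1 := fun x => by
  rw [Real.norm_eq_abs]; exact Real.abs_cos_le_one _

lemma bd_sin (t : ℝ) : ∀ x : ℝ, ‖Real.sin (t*x)‖ ≤ 1 := fun x => by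
  rw [Real.norm_eq_abs]; exact Real.abs_sin_le_one _

lemma hF'int (t : ℝ) : Integrable (F' t) := by
  have hc := integrable_poly_trig (-2*t) (1-t^2) t _ (meas_cos t) (bd_cos t)
  have hs := integrable_poly_trig 0 (1+t^2) t _ (meas_sin t) (bd_sin t)
  refine (hc.add hs).congr (ae_of_all _ fun x => ?_)
  simp only [Pi.add_apply]
  unfold F'
  ring

lemma hIcosint (t : ℝ) : Integrable (fun x : ℝ => Real.cos (t*x) * Real.exp (-x^2/2)) := by
  have h := integrable_poly_trig 1 0 0 _ (meas_cos t) (bd_cos t)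
  refine h.congr (ae_of_all _ fun x => ?_); ring

lemma hIoddint (t : ℝ) : Integrable (fun x : ℝ => x * Real.cos (t*x) * Real.exp (-x^2/2)) := by
  have h := integrable_poly_trig 0 1 0 _ (meas_cos t) (bd_cos t)
  refine h.congr (ae_of_all _ fun x => ?_); ring

lemma Ideriv (t : ℝ) : ∫ x : ℝ, F' t x = 0 := by
  have hIic := integral_Iic_of_hasDerivAt_of_tendsto' (a := 0)
    (fun x _ => hasDerivF t x) (hF'int t).integrableOn (TF_bot t)
  have hIoi := integral_Ioi_of_hasDerivAt_of_tendsto' (a := 0)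
    (fun x _ => hasDerivF t x) (hF'int t).integrableOn (TF_top t)
  have hsplit := intervalIntegral.integral_Iic_add_Ioi (b := 0) (μ := volume)
    (hF'int t).integrableOn (hF'int t).integrableOn
  rw [← hsplit, hIic, hIoi]
  ring

lemma key_integral (t : ℝ) :
    ∫ x : ℝ, x * ((t * x - (t ^ 2 + 1)) * Real.cos (t * x)
      + (t * x + (t ^ 2 + 1)) * Real.sin (t * x)) * Real.exp (-x^2/2)
    = Real.sqrt (2*π) * (2 * t * Real.exp (-t^2/2)) := by
  have hptw : ∀ x : ℝ, x * ((t * x - (t ^ 2 + 1)) * Real.cos (t * x)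
      + (t * x + (t ^ 2 + 1)) * Real.sin (t * x)) * Real.exp (-x^2/2)
      = F' t x + (2*t) * (Real.cos (t*x) * Real.exp (-x^2/2))
        + (-2) * (x * Real.cos (t*x) * Real.exp (-x^2/2)) := by
    intro x
    unfold F'
    ring
  rw [integral_congr_ae (ae_of_all _ hptw)]
  have h2 : Integrable (fun x : ℝ => (2*t) * (Real.cos (t*x) * Real.exp (-x^2/2))) :=
    (hIcosint t).const_mul (2*t)
  have h3 : Integrable (fun x : ℝ => (-2) * (x * Real.cos (t*x) * Real.exp (-x^2/2))) :=
    (hIoddint t).const_mul (-2)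
  have h12 : Integrable (fun x : ℝ => F' t x + (2*t) * (Real.cos (t*x) * Real.exp (-x^2/2))) :=
    (hF'int t).add h2
  rw [integral_add h12 h3, integral_add (hF'int t) h2, integral_const_mul, integral_const_mul,
    Ideriv, Icos, Iodd]
  ring

theorem stmt_5' (Ψ : ℝ → ℝ → ℝ)
    (hΨ : ∀ t x : ℝ, Ψ t x = (t * x - (t ^ 2 + 1)) * Real.cos (t * x)
      + (t * x + (t ^ 2 + 1)) * Real.sin (t * x)) :
    ∀ t : ℝ, (∫ x, x * Ψ t x ∂(gaussianReal 0 1)) = 2 * t * Real.exp (-t ^ 2 / 2) := by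
  intro t
  have hmeas : gaussianReal 0 1
      = (volume : Measure ℝ).withDensity fun x => ENNReal.ofReal (gaussianPDFReal 0 1 x) := by
    rw [gaussianReal_of_var_ne_zero 0 one_ne_zero]
    rfl
  have hpdf : ∀ x : ℝ, gaussianPDFReal 0 1 x = (Real.sqrt (2*π))⁻¹ * Real.exp (-x^2/2) := by
    intro x
    rw [gaussianPDFReal]
    norm_num
  rw [hmeas]
  have hd : (fun x : ℝ => ENNReal.ofReal (gaussianPDFReal 0 1 x))
      = fun x => ((gaussianPDFReal 0 1 x).toNNReal : ENNReal) := rfl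
  rw [hd, integral_withDensity_eq_integral_smul
    ((measurable_gaussianPDFReal 0 1).real_toNNReal) _]
  have : ∀ x : ℝ, (gaussianPDFReal 0 1 x).toNNReal • (x * Ψ t x)
      = (Real.sqrt (2*π))⁻¹ * (x * ((t * x - (t ^ 2 + 1)) * Real.cos (t * x)
        + (t * x + (t ^ 2 + 1)) * Real.sin (t * x)) * Real.exp (-x^2/2)) := by
    intro x
    rw [NNReal.smul_def, smul_eq_mul, Real.coe_toNNReal _ (gaussianPDFReal_nonneg 0 1 x),
      hpdf x, hΨ t x]
    ring
  rw [integral_congr_ae (ae_of_all _ this), integral_const_mul, key_integral]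
  have hsq : Real.sqrt (2*π) ≠ 0 := by positivity
  field_simp


end Stmt5

theorem stmt_5 (Ψ : ℝ → ℝ → ℝ)
    (hΨ : ∀ t x : ℝ, Ψ t x = (t * x - (t ^ 2 + 1)) * Real.cos (t * x)
      + (t * x + (t ^ 2 + 1)) * Real.sin (t * x)) :
    ∀ t : ℝ, (∫ x, x * Ψ t x ∂(gaussianReal 0 1)) = 2 * t * Real.exp (-t ^ 2 / 2) :=
  Stmt5.stmt_5' Ψ hΨ
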